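/- Let 0 < H ≤ 1/2 and R(s,t) = (1/2)(s^{2H} + t^{2H} - |s-t|^{2H}). For all u < s < t < v with 0 ≤ u, the rectangular increment satisfies R([s,t]×[u,v]) > 0. -/
import Mathlib


/-- Covariance function of fractional Brownian motion with Hurst parameter `H`. -/
noncomputable def fbmCov (H s t : ℝ) : ℝ :=
  (1/2) * (s ^ (2*H) + t ^ (2*H) - |s - t| ^ (2*H))

/-- Rectangular increment `R([s,s']×[t,t']) = R(s',t') - R(s,t') - R(s',t) + R(s,t)`. -/
def rectIncr (R : ℝ → ℝ → ℝ) (s s' t t' : ℝ) : ℝ :=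
  R s' t' - R s t' - R s' t + R s t

/-- For `0 < H ≤ 1/2` and `0 ≤ u < s < t < v`, the rectangular increment
`R([s,t]×[u,v])` of the fBm covariance is strictly positive. -/
theorem fbmCov_rectIncr_pos (H u s t v : ℝ) (hH0 : 0 < H) (hH : H ≤ 1/2)
    (hu : 0 ≤ u) (hus : u < s) (hst : s < t) (htv : t < v) :
    0 < rectIncr (fbmCov H) s t u v := by
  have h1 : |t - v| = v - t := by rw [abs_sub_comm]; exact abs_of_pos (by linarith)
  have h2 : |s - v| = v - s := by rw [abs_sub_comm]; exact abs_of_pos (by linarith)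
  have h3 : |t - u| = t - u := abs_of_pos (by linarith)
  have h4 : |s - u| = s - u := abs_of_pos (by linarith)
  have e1 : (v - t) ^ (2*H) < (v - s) ^ (2*H) :=
    Real.rpow_lt_rpow (by linarith) (by linarith) (by linarith)
  have e2 : (s - u) ^ (2*H) < (t - u) ^ (2*H) :=
    Real.rpow_lt_rpow (by linarith) (by linarith) (by linarith)
  simp only [rectIncr, fbmCov, h1, h2, h3, h4]
  linarith
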